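/- arXiv:1208.3594 — 10 statements merged into one kernel-verified Lean document; each statement's English description precedes it below -/
import Mathlib

section
/- Let m and n be positive integers with m > 1, n squarefree and m ∣ n, and let s be an integer with s² < 4·m and n ∣ 4·m − s². Then n = m or n = 2·m. -/
/-- Let `m` and `n` be positive integers with `m > 1`, `n` squarefree and `m ∣ n`,
and let `s` be an integer with `s² < 4·m` and `n ∣ 4·m − s²`.
Then `n = m` or `n = 2·m`. -/
theorem stmt_0 (m n : ℕ) (hm : 1 < m) (hn : 0 < n) (hsq : Squarefree n) (hmn : m ∣ n)
    (s : ℤ) (hs : s ^ 2 < 4 * (m : ℤ)) (hdvd : (n : ℤ) ∣ 4 * (m : ℤ) - s ^ 2) :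
    n = m ∨ n = 2 * m := by
  obtain ⟨k, hk⟩ := hmn
  obtain ⟨c, hc⟩ := hdvd
  have hm0 : (0:ℤ) < (m:ℤ) := by exact_mod_cast Nat.zero_lt_of_lt hm
  have hpos : (0:ℤ) < 4 * (m : ℤ) - s ^ 2 := by linarith
  have hn0 : (0:ℤ) < (n:ℤ) := by exact_mod_cast hn
  have hc0 : 0 < c := by nlinarith
  have hk0 : 0 < k := by
    rcases Nat.eq_zero_or_pos k with h | h
    · simp [h] at hk; omega
    · exact h
  have hkn : (n:ℤ) = (m:ℤ) * k := by exact_mod_cast hk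
  -- s^2 = (4 - c*k) * m
  have hkey : s ^ 2 = (4 - c * k) * (m:ℤ) := by
    have : 4 * (m:ℤ) - s ^ 2 = (m:ℤ) * k * c := by rw [← hkn]; exact hc
    ring_nf
    ring_nf at this
    linarith
  have hck4 : c * (k:ℤ) ≤ 4 := by nlinarith [sq_nonneg s]
  have hc1 : (1:ℤ) ≤ c := hc0
  have hkk : (0:ℤ) < (k:ℤ) := by exact_mod_cast hk0
  have hkle : (k:ℤ) ≤ 4 := by nlinarith
  have hk4 : k ≤ 4 := by exact_mod_cast hkle
  have hsqm : Squarefree m := hsq.squarefree_of_dvd ⟨k, hk⟩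
  interval_cases k
  · left; omega
  · right; omega
  · -- k = 3: c = 1, s^2 = m, contradict squarefree m > 1
    exfalso
    have hc1 : c = 1 := by omega
    subst hc1
    have hsm : s ^ 2 = (m:ℤ) := by linarith [hkey]
    have habs : s.natAbs * s.natAbs = m := by
      have := congrArg Int.natAbs hsm
      simpa [pow_two, Int.natAbs_mul] using this
    have hu := hsqm s.natAbs (habs ▸ dvd_refl _)
    have h1 : s.natAbs = 1 := Nat.isUnit_iff.mp hu
    rw [h1] at habs
    omega
  · -- k = 4: 4 ∣ n contradicts squarefree
    exfalso
    have : ¬ Squarefree n := by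
      rw [hk]
      intro h
      have := h 2 ⟨m, by ring⟩
      simp [Nat.isUnit_iff] at this
    exact this hsq
end

section
/- Let m and n be positive integers with m > 1, n squarefree and m ∣ n, and let t be an integer with t² < 3·m and n ∣ 3·m − t². Then n = m or n = 3·m. -/
/-- Let `m` and `n` be positive integers with `m > 1`, `n` squarefree and `m ∣ n`,
and let `t` be an integer with `t² < 3·m` and `n ∣ 3·m − t²`.
Then `n = m` or `n = 3·m`. -/
theorem stmt_1 (m n : ℕ) (hm : 1 < m) (hn : 0 < n) (hsq : Squarefree n) (hmn : m ∣ n)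
    (t : ℤ) (ht : t ^ 2 < 3 * (m : ℤ)) (hdvd : (n : ℤ) ∣ 3 * (m : ℤ) - t ^ 2) :
    n = m ∨ n = 3 * m := by
  have hmsq : Squarefree m := hsq.squarefree_of_dvd hmn
  have hmz : Squarefree (m : ℤ) := Int.squarefree_natCast.mpr hmsq
  have hmt2 : (m : ℤ) ∣ t ^ 2 := by
    have h1 : (m : ℤ) ∣ 3 * (m : ℤ) - t ^ 2 :=
      dvd_trans (Int.natCast_dvd_natCast.mpr hmn) hdvd
    have h2 : (m : ℤ) ∣ 3 * (m : ℤ) := dvd_mul_left _ _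
    have h3 := dvd_sub h2 h1
    simpa using h3
  have hmt : (m : ℤ) ∣ t := (hmz.dvd_pow_iff_dvd two_ne_zero).mp hmt2
  have hmlen : m ≤ n := Nat.le_of_dvd hn hmn
  obtain ⟨u, rfl⟩ := hmt
  rcases eq_or_ne u 0 with rfl | hu
  · -- t = 0 : n ∣ 3m, m ∣ n
    have hdvd' : n ∣ 3 * m := by
      have : (n : ℤ) ∣ ((3 * m : ℕ) : ℤ) := by push_cast; simpa using hdvd
      exact_mod_cast this
    obtain ⟨k, hk⟩ := hmn
    have hk3 : k ∣ 3 := by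
      have h3 : m * k ∣ m * 3 := by rw [← hk]; rwa [mul_comm] at hdvd'
      exact (mul_dvd_mul_iff_left (by omega : m ≠ 0)).mp h3
    rcases (Nat.prime_three.eq_one_or_self_of_dvd k hk3) with rfl | rfl <;> omega
  · -- u ≠ 0 : forces m = 2, u² = 1, then 3m − t² = 2 and n = 2 = m
    have hmpos : (0:ℤ) < m := by exact_mod_cast Nat.zero_lt_of_lt hm
    have hu2 : (1:ℤ) ≤ u ^ 2 := by
      have h1 := Int.one_le_abs hu
      nlinarith [sq_abs u, abs_nonneg u]
    have hm2 : (2:ℤ) ≤ m := by exact_mod_cast hm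
    have hmu2 : (m:ℤ) * u ^ 2 = 2 := by nlinarith [sq_nonneg u, mul_pow (m:ℤ) u 2]
    have hmeq : (m:ℤ) = 2 := by nlinarith
    have hueq : u ^ 2 = 1 := by nlinarith
    have hval : 3 * (m:ℤ) - ((m:ℤ) * u) ^ 2 = 2 := by
      rw [mul_pow, hmeq, hueq]; ring
    have hn2 : (n : ℤ) ∣ 2 := hval ▸ hdvd
    have hn2' : n ∣ 2 := by exact_mod_cast hn2
    have : n ≤ 2 := Nat.le_of_dvd (by norm_num) hn2'
    have hm2n : m = 2 := by exact_mod_cast hmeq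
    left; omega
end

section
/- Let a and b be positive integers with b ≡ 3 (mod 4). In B = ℍ[ℚ, −a, −b], set e₀ = 1, e₁ = i, e₂ = (1 + j)/2, e₃ = (i + k)/2. Then the ℤ-submodule of B spanned by e₀, e₁, e₂, e₃ contains 1, contains i and j, and is closed under multiplication (so it is a ℤ-order of B), and the determinant of the trace Gram matrix of (e₀, e₁, e₂, e₃) equals −a²·b² (so the order has reduced discriminant a·b). In particular it contains i with i² = −a and j with j² = −b. -/
open Quaternion

/-- The reduced trace of a quaternion. -/
def trd {c₁ c₂ : ℚ} (x : ℍ[ℚ, c₁, c₂]) : ℚ := 2 * x.re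

/-- The trace Gram matrix of a quadruple of quaternions:
its `(r, s)` entry is `trd (e r * e s)`. -/
def traceGram {c₁ c₂ : ℚ} (e : Fin 4 → ℍ[ℚ, c₁, c₂]) : Matrix (Fin 4) (Fin 4) ℚ :=
  Matrix.of fun r s => trd (e r * e s)

/-- The ℤ-submodule spanned by a quadruple of quaternions. -/
def quadSpan {c₁ c₂ : ℚ} (e : Fin 4 → ℍ[ℚ, c₁, c₂]) : Submodule ℤ ℍ[ℚ, c₁, c₂] :=
  Submodule.span ℤ {e 0, e 1, e 2, e 3}

set_option maxHeartbeats 1000000 in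
/-- For positive integers `a`, `b` with `b ≡ 3 (mod 4)`, in `ℍ[ℚ, −a, −b]` the lattice
spanned by `1, i, (1+j)/2, (i+k)/2` contains `1`, `i` and `j`, is closed under
multiplication, and its trace Gram matrix has determinant `−a²·b²`; moreover it
contains `i` with `i² = −a` and `j` with `j² = −b`. -/
theorem stmt_3 (a b : ℕ) (ha : 0 < a) (hb : 0 < b) (hb4 : b % 4 = 3)
    (i j k : ℍ[ℚ, -(a : ℚ), -(b : ℚ)])
    (hi : i = ⟨0, 1, 0, 0⟩) (hj : j = ⟨0, 0, 1, 0⟩) (hk : k = ⟨0, 0, 0, 1⟩)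
    (e : Fin 4 → ℍ[ℚ, -(a : ℚ), -(b : ℚ)])
    (he : e = ![1, i, (2 : ℚ)⁻¹ • (1 + j), (2 : ℚ)⁻¹ • (i + k)]) :
    (1 : ℍ[ℚ, -(a : ℚ), -(b : ℚ)]) ∈ quadSpan e ∧
    i ∈ quadSpan e ∧
    j ∈ quadSpan e ∧
    (∀ x ∈ quadSpan e, ∀ y ∈ quadSpan e, x * y ∈ quadSpan e) ∧
    (traceGram e).det = -((a : ℚ) ^ 2 * (b : ℚ) ^ 2) ∧
    i ^ 2 = algebraMap ℚ ℍ[ℚ, -(a : ℚ), -(b : ℚ)] (-(a : ℚ)) ∧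
    j ^ 2 = algebraMap ℚ ℍ[ℚ, -(a : ℚ), -(b : ℚ)] (-(b : ℚ)) := by
  obtain ⟨m, hm⟩ : ∃ m : ℕ, b = 4 * m + 3 := ⟨b / 4, by omega⟩
  have hbq : (b : ℚ) = 4 * (m : ℚ) + 3 := by exact_mod_cast congrArg (Nat.cast : ℕ → ℚ) hm
  have h0 : e 0 = 1 := by simp [he]
  have h1 : e 1 = i := by simp [he]
  have h2 : e 2 = (2 : ℚ)⁻¹ • (1 + j) := by simp [he]
  have h3 : e 3 = (2 : ℚ)⁻¹ • (i + k) := by simp [he]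
  have m0 : e 0 ∈ quadSpan e := Submodule.subset_span (by simp)
  have m1 : e 1 ∈ quadSpan e := Submodule.subset_span (by simp)
  have m2 : e 2 ∈ quadSpan e := Submodule.subset_span (by simp)
  have m3 : e 3 ∈ quadSpan e := Submodule.subset_span (by simp)
  -- express j
  have hj2 : j = e 2 + e 2 - e 0 := by
    ext <;> simp [h0, h2, hj] <;> norm_num
  have mj : j ∈ quadSpan e := hj2 ▸ sub_mem (add_mem m2 m2) m0
  -- product relations
  have p11 : e 1 * e 1 = (-(a : ℤ)) • e 0 := by
    ext <;> simp [h0, h1, hi] <;> push_cast <;> ring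
  have p12 : e 1 * e 2 = e 3 := by
    ext <;> simp [h1, h2, h3, hi, hj, hk] <;> ring
  have p13 : e 1 * e 3 = (-(a : ℤ)) • e 2 := by
    ext <;> simp [h1, h2, h3, hi, hj, hk] <;> push_cast <;> ring
  have p21 : e 2 * e 1 = e 1 - e 3 := by
    ext <;> simp [h1, h2, h3, hi, hj, hk] <;> ring
  have p22 : e 2 * e 2 = e 2 + (-((m : ℤ) + 1)) • e 0 := by
    ext <;> simp [h0, h2, hj, hbq] <;> push_cast <;> ring
  have p23 : e 2 * e 3 = ((m : ℤ) + 1) • e 1 := by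
    ext <;> simp [h1, h2, h3, hi, hj, hk, hbq] <;> push_cast <;> ring
  have p31 : e 3 * e 1 = (-(a : ℤ)) • e 0 + (a : ℤ) • e 2 := by
    ext <;> simp [h0, h1, h2, h3, hi, hj, hk] <;> push_cast <;> ring
  have p32 : e 3 * e 2 = (-((m : ℤ) + 1)) • e 1 + e 3 := by
    ext <;> simp [h1, h2, h3, hi, hj, hk, hbq] <;> push_cast <;> ring
  have p33 : e 3 * e 3 = (-((a : ℤ) * ((m : ℤ) + 1))) • e 0 := by
    ext <;> simp [h0, h3, hi, hk, hbq] <;> push_cast <;> ring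
  have key : ∀ r s : Fin 4, e r * e s ∈ quadSpan e := by
    intro r s
    fin_cases r <;> fin_cases s <;>
      simp only [Fin.isValue, show (⟨0, by norm_num⟩ : Fin 4) = 0 from rfl,
        show (⟨1, by norm_num⟩ : Fin 4) = 1 from rfl,
        show (⟨2, by norm_num⟩ : Fin 4) = 2 from rfl,
        show (⟨3, by norm_num⟩ : Fin 4) = 3 from rfl]
    · rw [h0, one_mul]; exact h0 ▸ m0
    · rw [h0, one_mul]; exact m1
    · rw [h0, one_mul]; exact m2
    · rw [h0, one_mul]; exact m3
    · rw [h0, mul_one]; exact m1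
    · rw [p11]; exact Submodule.smul_mem _ _ m0
    · rw [p12]; exact m3
    · rw [p13]; exact Submodule.smul_mem _ _ m2
    · rw [h0, mul_one]; exact m2
    · rw [p21]; exact sub_mem m1 m3
    · rw [p22]; exact add_mem m2 (Submodule.smul_mem _ _ m0)
    · rw [p23]; exact Submodule.smul_mem _ _ m1
    · rw [h0, mul_one]; exact m3
    · rw [p31]; exact add_mem (Submodule.smul_mem _ _ m0) (Submodule.smul_mem _ _ m2)
    · rw [p32]; exact add_mem (Submodule.smul_mem _ _ m1) m3
    · rw [p33]; exact Submodule.smul_mem _ _ m0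
  have genmem : ∀ x ∈ ({e 0, e 1, e 2, e 3} : Set ℍ[ℚ, -(a : ℚ), -(b : ℚ)]),
      ∀ y ∈ quadSpan e, x * y ∈ quadSpan e := by
    intro x hx y hy
    obtain (rfl | rfl | rfl | rfl) := hx
    all_goals {
      induction hy using Submodule.span_induction with
      | mem z hz =>
        obtain (rfl | rfl | rfl | rfl) := hz
        all_goals apply key
      | zero => simp [quadSpan]
      | add u v _ _ hu hv => rw [mul_add]; exact add_mem hu hv
      | smul c u _ hu => rw [mul_smul_comm]; exact Submodule.smul_mem _ _ hu }
  have mulmem : ∀ x ∈ quadSpan e, ∀ y ∈ quadSpan e, x * y ∈ quadSpan e := by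
    intro x hx y hy
    induction hx using Submodule.span_induction with
    | mem z hz => exact genmem z hz y hy
    | zero => simp [quadSpan]
    | add u v _ _ hu hv => rw [add_mul]; exact add_mem hu hv
    | smul c u _ hu => rw [smul_mul_assoc]; exact Submodule.smul_mem _ _ hu
  refine ⟨h0 ▸ m0, h1 ▸ m1, mj, mulmem, ?_, ?_, ?_⟩
  · have : traceGram e = Matrix.of ![![2, 0, 1, 0],
        ![0, -2*(a:ℚ), 0, -(a:ℚ)],
        ![1, 0, (1-(b:ℚ))/2, 0],
        ![0, -(a:ℚ), 0, -(a:ℚ)*(1+(b:ℚ))/2]] := by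
      ext r s
      fin_cases r <;> fin_cases s <;>
        simp [traceGram, trd, he, hi, hj, hk] <;> ring
    rw [this]
    simp [Matrix.det_succ_row_zero, Fin.sum_univ_succ, show ((2:Fin 4).succAbove 2) = 3 by decide]
    ring
  · rw [sq, hi]; ext <;> simp [QuaternionAlgebra.coe_algebraMap]
  · rw [sq, hj]; ext <;> simp [QuaternionAlgebra.coe_algebraMap]
end

section
/- Let n be a positive integer with n ≡ 2 (mod 4). In B = ℍ[ℚ, −1, −n], set e₀ = 1, e₁ = i, e₂ = (j + k)/2, e₃ = (1 + i + k)/2. Then the ℤ-submodule of B spanned by e₀, e₁, e₂, e₃ contains 1 and is closed under multiplication (so it is a ℤ-order of B), one has e₁² = −1 and e₂² = −n/2, and the determinant of the trace Gram matrix of (e₀, e₁, e₂, e₃) equals −n² (so the order has reduced discriminant n). -/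
set_option maxHeartbeats 1000000
open Quaternion

/-- For a positive integer `n ≡ 2 (mod 4)`, in `ℍ[ℚ, −1, −n]` the lattice spanned by
`1, i, (j+k)/2, (1+i+k)/2` contains `1` and is closed under multiplication, one has
`i² = −1` and `((j+k)/2)² = −n/2`, and the trace Gram matrix has determinant `−n²`. -/
theorem stmt_4 (n : ℕ) (hn : 0 < n) (hn4 : n % 4 = 2)
    (i j k : ℍ[ℚ, (-1 : ℚ), -(n : ℚ)])
    (hi : i = ⟨0, 1, 0, 0⟩) (hj : j = ⟨0, 0, 1, 0⟩) (hk : k = ⟨0, 0, 0, 1⟩)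
    (e : Fin 4 → ℍ[ℚ, (-1 : ℚ), -(n : ℚ)])
    (he : e = ![1, i, (2 : ℚ)⁻¹ • (j + k), (2 : ℚ)⁻¹ • (1 + i + k)]) :
    (1 : ℍ[ℚ, (-1 : ℚ), -(n : ℚ)]) ∈ quadSpan e ∧
    (∀ x ∈ quadSpan e, ∀ y ∈ quadSpan e, x * y ∈ quadSpan e) ∧
    e 1 ^ 2 = -1 ∧
    e 2 ^ 2 = algebraMap ℚ ℍ[ℚ, (-1 : ℚ), -(n : ℚ)] (-((n : ℚ) / 2)) ∧
    (traceGram e).det = -(n : ℚ) ^ 2 := by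
  obtain ⟨t, rfl⟩ : ∃ t, n = 4 * t + 2 := ⟨n / 4, by omega⟩
  have h0 : e 0 = 1 := by rw [he]; rfl
  have h1 : e 1 = i := by rw [he]; rfl
  have h2 : e 2 = (2 : ℚ)⁻¹ • (j + k) := by rw [he]; rfl
  have h3 : e 3 = (2 : ℚ)⁻¹ • (1 + i + k) := by rw [he]; rfl
  have hg : ∀ r : Fin 4, e r ∈ quadSpan e := by
    intro r
    apply Submodule.subset_span
    fin_cases r <;> simp
  have hcomb : ∀ (a b c d : ℤ),
      (a : ℚ) • e 0 + (b : ℚ) • e 1 + (c : ℚ) • e 2 + (d : ℚ) • e 3 ∈ quadSpan e := by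
    intro a b c d
    simp only [Int.cast_smul_eq_zsmul]
    exact add_mem (add_mem (add_mem (Submodule.smul_mem _ _ (hg 0))
      (Submodule.smul_mem _ _ (hg 1))) (Submodule.smul_mem _ _ (hg 2)))
      (Submodule.smul_mem _ _ (hg 3))
  -- product identities
  have p11 : e 1 * e 1 = ((-1 : ℤ) : ℚ) • e 0 + ((0:ℤ):ℚ) • e 1 + ((0:ℤ):ℚ) • e 2 + ((0:ℤ):ℚ) • e 3 := by
    rw [h0, h1, h2, h3, hi, hj, hk]; ext <;> simp
  have p12 : e 1 * e 2 = ((-1 : ℤ) : ℚ) • e 0 + ((-1:ℤ):ℚ) • e 1 + ((-1:ℤ):ℚ) • e 2 + ((2:ℤ):ℚ) • e 3 := by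
    rw [h0, h1, h2, h3, hi, hj, hk]; ext <;> simp <;> ring
  have p13 : e 1 * e 3 = ((-1 : ℤ) : ℚ) • e 0 + ((0:ℤ):ℚ) • e 1 + ((-1:ℤ):ℚ) • e 2 + ((1:ℤ):ℚ) • e 3 := by
    rw [h0, h1, h2, h3, hi, hj, hk]; ext <;> simp <;> ring
  have p21 : e 2 * e 1 = ((1 : ℤ) : ℚ) • e 0 + ((1:ℤ):ℚ) • e 1 + ((1:ℤ):ℚ) • e 2 + ((-2:ℤ):ℚ) • e 3 := by
    rw [h0, h1, h2, h3, hi, hj, hk]; ext <;> simp <;> ring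
  have p22 : e 2 * e 2 = ((-(2*t+1) : ℤ) : ℚ) • e 0 + ((0:ℤ):ℚ) • e 1 + ((0:ℤ):ℚ) • e 2 + ((0:ℤ):ℚ) • e 3 := by
    rw [h0, h1, h2, h3, hi, hj, hk]; ext <;> simp <;> push_cast <;> ring
  have p23 : e 2 * e 3 = (↑(-(t:ℤ)) : ℚ) • e 0 + (↑((t:ℤ)+1) : ℚ) • e 1 + ((1:ℤ):ℚ) • e 2 + ((-1:ℤ):ℚ) • e 3 := by
    rw [h0, h1, h2, h3, hi, hj, hk]; ext <;> simp <;> push_cast <;> ring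
  have p31 : e 3 * e 1 = ((0 : ℤ) : ℚ) • e 0 + ((1:ℤ):ℚ) • e 1 + ((1:ℤ):ℚ) • e 2 + ((-1:ℤ):ℚ) • e 3 := by
    rw [h0, h1, h2, h3, hi, hj, hk]; ext <;> simp <;> ring
  have p32 : e 3 * e 2 = (↑(-((t:ℤ)+1)) : ℚ) • e 0 + (↑(-((t:ℤ)+1)) : ℚ) • e 1 + ((0:ℤ):ℚ) • e 2 + ((1:ℤ):ℚ) • e 3 := by
    rw [h0, h1, h2, h3, hi, hj, hk]; ext <;> simp <;> push_cast <;> ring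
  have p33 : e 3 * e 3 = (↑(-((t:ℤ)+1)) : ℚ) • e 0 + ((0:ℤ):ℚ) • e 1 + ((0:ℤ):ℚ) • e 2 + ((1:ℤ):ℚ) • e 3 := by
    rw [h0, h1, h2, h3, hi, hj, hk]; ext <;> simp <;> push_cast <;> ring
  have hle : quadSpan e * quadSpan e ≤ quadSpan e := by
    rw [quadSpan, Submodule.span_mul_span]
    refine Submodule.span_le.mpr ?_
    rintro z ⟨u, hu, v, hv, rfl⟩
    show u * v ∈ quadSpan e
    simp only [Set.mem_insert_iff, Set.mem_singleton_iff] at hu hv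
    rcases hu with rfl | rfl | rfl | rfl <;> rcases hv with rfl | rfl | rfl | rfl <;>
      first
        | (rw [h0, one_mul, ← h0]; exact hg 0)
        | (rw [h0, one_mul]; exact hg _)
        | (rw [h0, mul_one]; exact hg _)
        | (rw [p11]; exact hcomb _ _ _ _)
        | (rw [p12]; exact hcomb _ _ _ _)
        | (rw [p13]; exact hcomb _ _ _ _)
        | (rw [p21]; exact hcomb _ _ _ _)
        | (rw [p22]; exact hcomb _ _ _ _)
        | (rw [p23]; exact hcomb _ _ _ _)
        | (rw [p31]; exact hcomb _ _ _ _)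
        | (rw [p32]; exact hcomb _ _ _ _)
        | (rw [p33]; exact hcomb _ _ _ _)
  refine ⟨h0 ▸ hg 0, fun x hx y hy => hle (Submodule.mul_mem_mul hx hy), ?_, ?_, ?_⟩
  · rw [sq, h1, hi]; ext <;> simp
  · rw [sq, h2, hj, hk]; ext <;> simp <;> push_cast <;> ring
  · have hGram : traceGram e =
        !![2, 0, 0, 1;
           0, -2, 0, -1;
           0, 0, -(4*(t:ℚ)+2), -(2*(t:ℚ)+1);
           1, -1, -(2*(t:ℚ)+1), -(2*(t:ℚ)+1)] := by
      ext r s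
      fin_cases r <;> fin_cases s <;>
        simp [traceGram, trd, h0, h1, h2, h3, hi, hj, hk, Matrix.vecHead, Matrix.vecTail] <;> push_cast <;> ring
    rw [hGram]
    simp [Matrix.det_succ_row_zero, Fin.sum_univ_succ, Fin.succAbove,
      Matrix.submatrix_apply, show (Fin.castSucc 2 : Fin 4) = 2 from rfl]
    push_cast
    ring
end

section
/- Let n be a positive integer with n ≡ 2 (mod 3). In B = ℍ[ℚ, −3, −n], set e₀ = 1, e₁ = (1 + i)/2, e₂ = (3 + i + 3j + k)/6, e₃ = (−3 + i − 2k)/6. Then the ℤ-submodule of B spanned by e₀, e₁, e₂, e₃ contains 1, contains i and j, and is closed under multiplication (so it is a ℤ-order of B), one has e₁² = e₁ − 1 (so e₁ is a primitive sixth root of unity) and j² = −n, and the determinant of the trace Gram matrix of (e₀, e₁, e₂, e₃) equals −n² (so the order has reduced discriminant n). -/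
open Quaternion

@[simp] lemma q2_re {c₁ c₂ : ℚ} : (2 : ℍ[ℚ,c₁,c₂]).re = 2 := rfl
@[simp] lemma q2_imI {c₁ c₂ : ℚ} : (2 : ℍ[ℚ,c₁,c₂]).imI = 0 := rfl
@[simp] lemma q2_imJ {c₁ c₂ : ℚ} : (2 : ℍ[ℚ,c₁,c₂]).imJ = 0 := rfl
@[simp] lemma q2_imK {c₁ c₂ : ℚ} : (2 : ℍ[ℚ,c₁,c₂]).imK = 0 := rfl
@[simp] lemma q3_re {c₁ c₂ : ℚ} : (3 : ℍ[ℚ,c₁,c₂]).re = 3 := rfl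
@[simp] lemma q3_imI {c₁ c₂ : ℚ} : (3 : ℍ[ℚ,c₁,c₂]).imI = 0 := rfl
@[simp] lemma q3_imJ {c₁ c₂ : ℚ} : (3 : ℍ[ℚ,c₁,c₂]).imJ = 0 := rfl
@[simp] lemma q3_imK {c₁ c₂ : ℚ} : (3 : ℍ[ℚ,c₁,c₂]).imK = 0 := rfl

set_option maxHeartbeats 4000000 in
/-- For a positive integer `n ≡ 2 (mod 3)`, in `ℍ[ℚ, −3, −n]` the lattice spanned by
`1, (1+i)/2, (3+i+3j+k)/6, (−3+i−2k)/6` contains `1`, `i` and `j`, is closed under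
multiplication, one has `((1+i)/2)² = (1+i)/2 − 1` and `j² = −n`, and the trace Gram
matrix has determinant `−n²`. -/
theorem stmt_5 (n : ℕ) (hn : 0 < n) (hn3 : n % 3 = 2)
    (i j k : ℍ[ℚ, (-3 : ℚ), -(n : ℚ)])
    (hi : i = ⟨0, 1, 0, 0⟩) (hj : j = ⟨0, 0, 1, 0⟩) (hk : k = ⟨0, 0, 0, 1⟩)
    (e : Fin 4 → ℍ[ℚ, (-3 : ℚ), -(n : ℚ)])
    (he : e = ![1, (2 : ℚ)⁻¹ • (1 + i), (6 : ℚ)⁻¹ • (3 + i + 3 • j + k),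
      (6 : ℚ)⁻¹ • (-3 + i - 2 • k)]) :
    (1 : ℍ[ℚ, (-3 : ℚ), -(n : ℚ)]) ∈ quadSpan e ∧
    i ∈ quadSpan e ∧
    j ∈ quadSpan e ∧
    (∀ x ∈ quadSpan e, ∀ y ∈ quadSpan e, x * y ∈ quadSpan e) ∧
    e 1 ^ 2 = e 1 - 1 ∧
    j ^ 2 = algebraMap ℚ ℍ[ℚ, (-3 : ℚ), -(n : ℚ)] (-(n : ℚ)) ∧
    (traceGram e).det = -(n : ℚ) ^ 2 := by
  obtain ⟨m, hm'⟩ : ∃ m : ℤ, (n : ℤ) + 1 = 3 * m := ⟨((n : ℤ) + 1) / 3, by omega⟩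
  have hm : (n : ℚ) = 3 * (m : ℚ) - 1 := by
    have : ((n : ℤ) : ℚ) = ((3 * m - 1 : ℤ) : ℚ) := by rw [← hm']; push_cast; ring
    push_cast at this; exact this
  subst hi hj hk
  have he0 : e 0 = 1 := by rw [he]; rfl
  have he1 : e 1 = (2 : ℚ)⁻¹ • (1 + (⟨0, 1, 0, 0⟩ : ℍ[ℚ, (-3 : ℚ), -(n : ℚ)])) := by
    rw [he]; rfl
  have he2 : e 2 = (6 : ℚ)⁻¹ • (3 + (⟨0, 1, 0, 0⟩ : ℍ[ℚ, (-3 : ℚ), -(n : ℚ)])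
      + 3 • (⟨0, 0, 1, 0⟩ : ℍ[ℚ, (-3 : ℚ), -(n : ℚ)]) + ⟨0, 0, 0, 1⟩) := by rw [he]; rfl
  have he3 : e 3 = (6 : ℚ)⁻¹ • (-3 + (⟨0, 1, 0, 0⟩ : ℍ[ℚ, (-3 : ℚ), -(n : ℚ)])
      - 2 • (⟨0, 0, 0, 1⟩ : ℍ[ℚ, (-3 : ℚ), -(n : ℚ)])) := by rw [he]; rfl
  have hmem : ∀ r : Fin 4, e r ∈ quadSpan e := by
    intro r
    apply Submodule.subset_span
    fin_cases r <;> simp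
  have h00 : e 0 * e 0 ∈ quadSpan e := by
    have hq : e 0 * e 0 = e 0 := by
      simp only [he0, he1, he2, he3]
      ext <;> simp [hm] <;> ring
    rw [hq]; exact (hmem 0)
  have h01 : e 0 * e 1 ∈ quadSpan e := by
    have hq : e 0 * e 1 = e 1 := by
      simp only [he0, he1, he2, he3]
      ext <;> simp [hm] <;> ring
    rw [hq]; exact (hmem 1)
  have h02 : e 0 * e 2 ∈ quadSpan e := by
    have hq : e 0 * e 2 = e 2 := by
      simp only [he0, he1, he2, he3]
      ext <;> simp [hm] <;> ring
    rw [hq]; exact (hmem 2)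
  have h03 : e 0 * e 3 ∈ quadSpan e := by
    have hq : e 0 * e 3 = e 3 := by
      simp only [he0, he1, he2, he3]
      ext <;> simp [hm] <;> ring
    rw [hq]; exact (hmem 3)
  have h10 : e 1 * e 0 ∈ quadSpan e := by
    have hq : e 1 * e 0 = e 1 := by
      simp only [he0, he1, he2, he3]
      ext <;> simp [hm] <;> ring
    rw [hq]; exact (hmem 1)
  have h11 : e 1 * e 1 ∈ quadSpan e := by
    have hq : e 1 * e 1 = (-1 : ℤ) • e 0 + e 1 := by
      simp only [he0, he1, he2, he3]
      ext <;> simp [hm] <;> ring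
    rw [hq]; exact (add_mem (Submodule.smul_mem _ (-1) (hmem 0)) (hmem 1))
  have h12 : e 1 * e 2 ∈ quadSpan e := by
    have hq : e 1 * e 2 = (-1 : ℤ) • e 0 + e 1 + (-1 : ℤ) • e 3 := by
      simp only [he0, he1, he2, he3]
      ext <;> simp [hm] <;> ring
    rw [hq]; exact (add_mem (add_mem (Submodule.smul_mem _ (-1) (hmem 0)) (hmem 1)) (Submodule.smul_mem _ (-1) (hmem 3)))
  have h13 : e 1 * e 3 ∈ quadSpan e := by
    have hq : e 1 * e 3 = (-1 : ℤ) • e 1 + e 2 + e 3 := by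
      simp only [he0, he1, he2, he3]
      ext <;> simp [hm] <;> ring
    rw [hq]; exact (add_mem (add_mem (Submodule.smul_mem _ (-1) (hmem 1)) (hmem 2)) (hmem 3))
  have h20 : e 2 * e 0 ∈ quadSpan e := by
    have hq : e 2 * e 0 = e 2 := by
      simp only [he0, he1, he2, he3]
      ext <;> simp [hm] <;> ring
    rw [hq]; exact (hmem 2)
  have h21 : e 2 * e 1 ∈ quadSpan e := by
    have hq : e 2 * e 1 = e 2 + e 3 := by
      simp only [he0, he1, he2, he3]
      ext <;> simp [hm] <;> ring
    rw [hq]; exact (add_mem (hmem 2) (hmem 3))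
  have h22 : e 2 * e 2 ∈ quadSpan e := by
    have hq : e 2 * e 2 = (-m) • e 0 + e 2 := by
      simp only [he0, he1, he2, he3]
      ext <;> simp [hm] <;> ring
    rw [hq]; exact (add_mem (Submodule.smul_mem _ (-m) (hmem 0)) (hmem 2))
  have h23 : e 2 * e 3 ∈ quadSpan e := by
    have hq : e 2 * e 3 = m • e 0 + (-m) • e 1 + e 3 := by
      simp only [he0, he1, he2, he3]
      ext <;> simp [hm] <;> ring
    rw [hq]; exact (add_mem (add_mem (Submodule.smul_mem _ m (hmem 0)) (Submodule.smul_mem _ (-m) (hmem 1))) (hmem 3))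
  have h30 : e 3 * e 0 ∈ quadSpan e := by
    have hq : e 3 * e 0 = e 3 := by
      simp only [he0, he1, he2, he3]
      ext <;> simp [hm] <;> ring
    rw [hq]; exact (hmem 3)
  have h31 : e 3 * e 1 ∈ quadSpan e := by
    have hq : e 3 * e 1 = (-1 : ℤ) • e 2 := by
      simp only [he0, he1, he2, he3]
      ext <;> simp [hm] <;> ring
    rw [hq]; exact (Submodule.smul_mem _ (-1) (hmem 2))
  have h32 : e 3 * e 2 ∈ quadSpan e := by
    have hq : e 3 * e 2 = m • e 1 + (-1 : ℤ) • e 2 := by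
      simp only [he0, he1, he2, he3]
      ext <;> simp [hm] <;> ring
    rw [hq]; exact (add_mem (Submodule.smul_mem _ m (hmem 1)) (Submodule.smul_mem _ (-1) (hmem 2)))
  have h33 : e 3 * e 3 ∈ quadSpan e := by
    have hq : e 3 * e 3 = (-m) • e 0 + (-1 : ℤ) • e 3 := by
      simp only [he0, he1, he2, he3]
      ext <;> simp [hm] <;> ring
    rw [hq]; exact (add_mem (Submodule.smul_mem _ (-m) (hmem 0)) (Submodule.smul_mem _ (-1) (hmem 3)))
  have hle : quadSpan e * quadSpan e ≤ quadSpan e := by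
    rw [quadSpan, Submodule.span_mul_span]
    apply Submodule.span_le.2
    rintro z hz
    rw [Set.mem_mul] at hz
    obtain ⟨a, ha, b, hb, rfl⟩ := hz
    simp only [Set.mem_insert_iff, Set.mem_singleton_iff] at ha hb
    rcases ha with rfl | rfl | rfl | rfl <;> rcases hb with rfl | rfl | rfl | rfl <;>
      first |
      exact h00 | exact h01 | exact h02 | exact h03 | exact h10 | exact h11 | exact h12 | exact h13 | exact h20 | exact h21 | exact h22 | exact h23 | exact h30 | exact h31 | exact h32 | exact h33
  refine ⟨?_, ?_, ?_, ?_, ?_, ?_, ?_⟩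
  · rw [← he0]; exact hmem 0
  · have : (⟨0, 1, 0, 0⟩ : ℍ[ℚ, (-3 : ℚ), -(n : ℚ)]) = (-1 : ℤ) • e 0 + (2 : ℤ) • e 1 := by
      rw [he0, he1]; ext <;> simp <;> ring
    rw [this]
    exact add_mem (Submodule.smul_mem _ (-1) (hmem 0)) (Submodule.smul_mem _ 2 (hmem 1))
  · have : (⟨0, 0, 1, 0⟩ : ℍ[ℚ, (-3 : ℚ), -(n : ℚ)])
        = (-1 : ℤ) • e 1 + (2 : ℤ) • e 2 + e 3 := by
      rw [he1, he2, he3]; ext <;> simp <;> ring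
    rw [this]
    exact add_mem (add_mem (Submodule.smul_mem _ (-1) (hmem 1))
      (Submodule.smul_mem _ 2 (hmem 2))) (hmem 3)
  · intro x hx y hy
    exact hle (Submodule.mul_mem_mul hx hy)
  · rw [he1]; ext <;> simp [pow_two] <;> norm_num
  · ext <;> simp [pow_two]
  · have g00 : trd (e 0 * e 0) = 2 := by
      simp only [he0, he1, he2, he3]
      simp [trd]
      try ring
    have g01 : trd (e 0 * e 1) = 1 := by
      simp only [he0, he1, he2, he3]
      simp [trd]
      try ring
    have g02 : trd (e 0 * e 2) = 1 := by
      simp only [he0, he1, he2, he3]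
      simp [trd]
      try ring
    have g03 : trd (e 0 * e 3) = -1 := by
      simp only [he0, he1, he2, he3]
      simp [trd]
      try ring
    have g10 : trd (e 1 * e 0) = 1 := by
      simp only [he0, he1, he2, he3]
      simp [trd]
      try ring
    have g11 : trd (e 1 * e 1) = -1 := by
      simp only [he0, he1, he2, he3]
      simp [trd]
      try ring
    have g12 : trd (e 1 * e 2) = 0 := by
      simp only [he0, he1, he2, he3]
      simp [trd]
      try ring
    have g13 : trd (e 1 * e 3) = -1 := by
      simp only [he0, he1, he2, he3]
      simp [trd]
      try ring
    have g20 : trd (e 2 * e 0) = 1 := by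
      simp only [he0, he1, he2, he3]
      simp [trd]
      try ring
    have g21 : trd (e 2 * e 1) = 0 := by
      simp only [he0, he1, he2, he3]
      simp [trd]
      try ring
    have g22 : trd (e 2 * e 2) = 1/3 - 2/3*(n:ℚ) := by
      simp only [he0, he1, he2, he3]
      simp [trd]
      try ring
    have g23 : trd (e 2 * e 3) = -2/3 + 1/3*(n:ℚ) := by
      simp only [he0, he1, he2, he3]
      simp [trd]
      try ring
    have g30 : trd (e 3 * e 0) = -1 := by
      simp only [he0, he1, he2, he3]
      simp [trd]
      try ring
    have g31 : trd (e 3 * e 1) = -1 := by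
      simp only [he0, he1, he2, he3]
      simp [trd]
      try ring
    have g32 : trd (e 3 * e 2) = -2/3 + 1/3*(n:ℚ) := by
      simp only [he0, he1, he2, he3]
      simp [trd]
      try ring
    have g33 : trd (e 3 * e 3) = 1/3 - 2/3*(n:ℚ) := by
      simp only [he0, he1, he2, he3]
      simp [trd]
      try ring
    have hG : traceGram e = Matrix.of ![![2,1,1,-1],![1,-1,0,-1],
        ![1,0,1/3-2/3*(n:ℚ),-2/3+1/3*(n:ℚ)],![-1,-1,-2/3+1/3*(n:ℚ),1/3-2/3*(n:ℚ)]] := by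
      ext r s
      fin_cases r <;> fin_cases s <;>
        simp [traceGram, g00, g01, g02, g03, g10, g11, g12, g13, g20, g21, g22, g23,
          g30, g31, g32, g33]
    rw [hG]
    simp [Matrix.det_succ_row_zero, Fin.sum_univ_succ,
      show ((1:Fin 4).succAbove 2 : Fin 4) = 3 from rfl,
      show ((2:Fin 4).succAbove 2 : Fin 4) = 3 from rfl,
      show (Fin.castSucc 2 : Fin 4) = 2 from rfl,
      show ((3:Fin 4).succAbove 2 : Fin 4) = 2 from rfl]
    ring
end

section
/- Let n be a positive integer divisible by 3. In B = ℍ[ℚ, −3, −n], set e₀ = 1, e₁ = (1 + i)/2, e₂ = k/3, e₃ = (k − 3j)/6. Then the ℤ-submodule of B spanned by e₀, e₁, e₂, e₃ contains 1, contains j, and is closed under multiplication (so it is a ℤ-order of B), one has e₁² = e₁ − 1 and e₂² = −n/3, and the determinant of the trace Gram matrix of (e₀, e₁, e₂, e₃) equals −n² (so the order has reduced discriminant n). -/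
open Quaternion

set_option maxHeartbeats 2000000 in
/-- For a positive integer `n` divisible by 3, in `ℍ[ℚ, −3, −n]` the lattice spanned by
`1, (1+i)/2, k/3, (k−3j)/6` contains `1` and `j`, is closed under multiplication, one has
`((1+i)/2)² = (1+i)/2 − 1` and `(k/3)² = −n/3`, and the trace Gram matrix has
determinant `−n²`. -/
theorem stmt_6 (n : ℕ) (hn : 0 < n) (hn3 : 3 ∣ n)
    (i j k : ℍ[ℚ, (-3 : ℚ), -(n : ℚ)])
    (hi : i = ⟨0, 1, 0, 0⟩) (hj : j = ⟨0, 0, 1, 0⟩) (hk : k = ⟨0, 0, 0, 1⟩)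
    (e : Fin 4 → ℍ[ℚ, (-3 : ℚ), -(n : ℚ)])
    (he : e = ![1, (2 : ℚ)⁻¹ • (1 + i), (3 : ℚ)⁻¹ • k, (6 : ℚ)⁻¹ • (k - 3 • j)]) :
    (1 : ℍ[ℚ, (-3 : ℚ), -(n : ℚ)]) ∈ quadSpan e ∧
    j ∈ quadSpan e ∧
    (∀ x ∈ quadSpan e, ∀ y ∈ quadSpan e, x * y ∈ quadSpan e) ∧
    e 1 ^ 2 = e 1 - 1 ∧
    e 2 ^ 2 = algebraMap ℚ ℍ[ℚ, (-3 : ℚ), -(n : ℚ)] (-((n : ℚ) / 3)) ∧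
    (traceGram e).det = -(n : ℚ) ^ 2 := by
  obtain ⟨m, rfl⟩ := hn3
  subst hi hj hk
  have he0 : e 0 = 1 := by rw [he]; rfl
  have he1 : e 1 = (2 : ℚ)⁻¹ • (1 + ⟨0, 1, 0, 0⟩) := by rw [he]; rfl
  have he2 : e 2 = (3 : ℚ)⁻¹ • ⟨0, 0, 0, 1⟩ := by rw [he]; rfl
  have he3 : e 3 = (6 : ℚ)⁻¹ • ((⟨0, 0, 0, 1⟩ : ℍ[ℚ, (-3 : ℚ), -((3*m : ℕ) : ℚ)])
      - 3 • ⟨0, 0, 1, 0⟩) := by rw [he]; rfl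
  have h0 : e 0 ∈ quadSpan e := Submodule.subset_span (by simp)
  have h1 : e 1 ∈ quadSpan e := Submodule.subset_span (by simp)
  have h2 : e 2 ∈ quadSpan e := Submodule.subset_span (by simp)
  have h3 : e 3 ∈ quadSpan e := Submodule.subset_span (by simp)
  have hcomb : ∀ a b c d : ℤ, a • e 0 + b • e 1 + c • e 2 + d • e 3 ∈ quadSpan e :=
    fun a b c d => add_mem (add_mem (add_mem (Submodule.smul_mem _ _ h0)
      (Submodule.smul_mem _ _ h1)) (Submodule.smul_mem _ _ h2)) (Submodule.smul_mem _ _ h3)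
  have p11 : e 1 * e 1 = (-1 : ℤ) • e 0 + (1 : ℤ) • e 1 + (0 : ℤ) • e 2 + (0 : ℤ) • e 3 := by
    rw [he0, he1]
    ext <;> simp [QuaternionAlgebra.re_mul, QuaternionAlgebra.imI_mul,
      QuaternionAlgebra.imJ_mul, QuaternionAlgebra.imK_mul] <;> ring
  have p12 : e 1 * e 2 = (0 : ℤ) • e 0 + (0 : ℤ) • e 1 + (0 : ℤ) • e 2 + (1 : ℤ) • e 3 := by
    rw [he0, he1, he2, he3]
    ext <;> simp [QuaternionAlgebra.re_mul, QuaternionAlgebra.imI_mul,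
      QuaternionAlgebra.imJ_mul, QuaternionAlgebra.imK_mul] <;> ring
  have p21 : e 2 * e 1 = (0 : ℤ) • e 0 + (0 : ℤ) • e 1 + (1 : ℤ) • e 2 + (-1 : ℤ) • e 3 := by
    rw [he0, he1, he2, he3]
    ext <;> simp [QuaternionAlgebra.re_mul, QuaternionAlgebra.imI_mul,
      QuaternionAlgebra.imJ_mul, QuaternionAlgebra.imK_mul] <;> ring
  have p13 : e 1 * e 3 = (0 : ℤ) • e 0 + (0 : ℤ) • e 1 + (-1 : ℤ) • e 2 + (1 : ℤ) • e 3 := by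
    rw [he0, he1, he2, he3]
    ext <;> simp [QuaternionAlgebra.re_mul, QuaternionAlgebra.imI_mul,
      QuaternionAlgebra.imJ_mul, QuaternionAlgebra.imK_mul] <;> ring
  have p31 : e 3 * e 1 = (0 : ℤ) • e 0 + (0 : ℤ) • e 1 + (1 : ℤ) • e 2 + (0 : ℤ) • e 3 := by
    rw [he0, he1, he2, he3]
    ext <;> simp [QuaternionAlgebra.re_mul, QuaternionAlgebra.imI_mul,
      QuaternionAlgebra.imJ_mul, QuaternionAlgebra.imK_mul] <;> ring
  have p22 : e 2 * e 2 = (-(m : ℤ)) • e 0 + (0 : ℤ) • e 1 + (0 : ℤ) • e 2 + (0 : ℤ) • e 3 := by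
    rw [he0, he1, he2, he3]
    ext <;> simp [QuaternionAlgebra.re_mul, QuaternionAlgebra.imI_mul,
      QuaternionAlgebra.imJ_mul, QuaternionAlgebra.imK_mul] <;> push_cast <;> ring
  have p23 : e 2 * e 3 = (-(m : ℤ)) • e 0 + ((m : ℤ)) • e 1 + (0 : ℤ) • e 2 + (0 : ℤ) • e 3 := by
    rw [he0, he1, he2, he3]
    ext <;> simp [QuaternionAlgebra.re_mul, QuaternionAlgebra.imI_mul,
      QuaternionAlgebra.imJ_mul, QuaternionAlgebra.imK_mul] <;> push_cast <;> ring
  have p32 : e 3 * e 2 = (0 : ℤ) • e 0 + (-(m : ℤ)) • e 1 + (0 : ℤ) • e 2 + (0 : ℤ) • e 3 := by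
    rw [he0, he1, he2, he3]
    ext <;> simp [QuaternionAlgebra.re_mul, QuaternionAlgebra.imI_mul,
      QuaternionAlgebra.imJ_mul, QuaternionAlgebra.imK_mul] <;> push_cast <;> ring
  have p33 : e 3 * e 3 = (-(m : ℤ)) • e 0 + (0 : ℤ) • e 1 + (0 : ℤ) • e 2 + (0 : ℤ) • e 3 := by
    rw [he0, he1, he2, he3]
    ext <;> simp [QuaternionAlgebra.re_mul, QuaternionAlgebra.imI_mul,
      QuaternionAlgebra.imJ_mul, QuaternionAlgebra.imK_mul] <;> push_cast <;> ring
  refine ⟨by rw [← he0]; exact h0, ?_, ?_, ?_, ?_, ?_⟩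
  · -- j ∈ span
    have hj' : (⟨0, 0, 1, 0⟩ : ℍ[ℚ, (-3 : ℚ), -((3*m : ℕ) : ℚ)]) =
        (0 : ℤ) • e 0 + (0 : ℤ) • e 1 + (1 : ℤ) • e 2 + (-2 : ℤ) • e 3 := by
      rw [he0, he1, he2, he3]
      ext <;> simp <;> ring
    rw [hj']; exact hcomb 0 0 1 (-2)
  · -- closure
    intro x hx y hy
    induction hx using Submodule.span_induction with
    | mem z hz =>
      induction hy using Submodule.span_induction with
      | mem w hw =>
        simp only [Set.mem_insert_iff, Set.mem_singleton_iff] at hz hw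
        rcases hz with rfl | rfl | rfl | rfl <;> rcases hw with rfl | rfl | rfl | rfl
        · rw [he0, one_mul, ← he0]; exact h0
        · rw [he0, one_mul]; exact h1
        · rw [he0, one_mul]; exact h2
        · rw [he0, one_mul]; exact h3
        · rw [he0, mul_one]; exact h1
        · rw [p11]; exact hcomb _ _ _ _
        · rw [p12]; exact hcomb _ _ _ _
        · rw [p13]; exact hcomb _ _ _ _
        · rw [he0, mul_one]; exact h2
        · rw [p21]; exact hcomb _ _ _ _
        · rw [p22]; exact hcomb _ _ _ _
        · rw [p23]; exact hcomb _ _ _ _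
        · rw [he0, mul_one]; exact h3
        · rw [p31]; exact hcomb _ _ _ _
        · rw [p32]; exact hcomb _ _ _ _
        · rw [p33]; exact hcomb _ _ _ _
      | zero => simpa using (quadSpan e).zero_mem
      | add u v _ _ hu hv => rw [mul_add]; exact add_mem hu hv
      | smul t u _ hu => rw [mul_smul_comm]; exact Submodule.smul_mem _ _ hu
    | zero => simpa using (quadSpan e).zero_mem
    | add u v _ _ hu hv => rw [add_mul]; exact add_mem hu hv
    | smul t u _ hu => rw [smul_mul_assoc]; exact Submodule.smul_mem _ _ hu
  · -- e1² = e1 - 1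
    rw [sq, he1]
    ext <;> simp [QuaternionAlgebra.re_mul, QuaternionAlgebra.imI_mul,
      QuaternionAlgebra.imJ_mul, QuaternionAlgebra.imK_mul] <;> ring
  · -- e2² = -(n/3)
    rw [sq, he2]
    ext <;> simp [QuaternionAlgebra.re_mul, QuaternionAlgebra.imI_mul,
      QuaternionAlgebra.imJ_mul, QuaternionAlgebra.imK_mul] <;> push_cast <;> ring
  · -- determinant
    simp only [traceGram, trd, Matrix.of_apply, he]
    simp [Matrix.det_succ_row_zero, Fin.sum_univ_succ, Fin.succAbove, QuaternionAlgebra.re_mul]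
    push_cast
    ring
end

section
/- Let a and b be positive integers with a ≡ 3 (mod 4). In B = ℍ[ℚ, −a, −b], set e₀ = 1, e₁ = (1 + i)/2, e₂ = j, e₃ = (j + k)/2. Then the ℤ-submodule of B spanned by e₀, e₁, e₂, e₃ contains 1 and is closed under multiplication (so it is a ℤ-order of B), and the determinant of the trace Gram matrix of (e₀, e₁, e₂, e₃) equals −a²·b² (so the order has reduced discriminant a·b). -/
open Quaternion

set_option maxHeartbeats 1000000
/-- For positive integers `a`, `b` with `a ≡ 3 (mod 4)`, in `ℍ[ℚ, −a, −b]` the lattice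
spanned by `1, (1+i)/2, j, (j+k)/2` contains `1` and is closed under multiplication,
and its trace Gram matrix has determinant `−a²·b²`. -/
theorem stmt_7 (a b : ℕ) (ha : 0 < a) (hb : 0 < b) (ha4 : a % 4 = 3)
    (i j k : ℍ[ℚ, -(a : ℚ), -(b : ℚ)])
    (hi : i = ⟨0, 1, 0, 0⟩) (hj : j = ⟨0, 0, 1, 0⟩) (hk : k = ⟨0, 0, 0, 1⟩)
    (e : Fin 4 → ℍ[ℚ, -(a : ℚ), -(b : ℚ)])
    (he : e = ![1, (2 : ℚ)⁻¹ • (1 + i), j, (2 : ℚ)⁻¹ • (j + k)]) :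
    (1 : ℍ[ℚ, -(a : ℚ), -(b : ℚ)]) ∈ quadSpan e ∧
    (∀ x ∈ quadSpan e, ∀ y ∈ quadSpan e, x * y ∈ quadSpan e) ∧
    (traceGram e).det = -((a : ℚ) ^ 2 * (b : ℚ) ^ 2) := by
  obtain ⟨c, hc⟩ : ∃ c : ℕ, a + 1 = 4 * c := ⟨(a + 1) / 4, by omega⟩
  have hca : (a : ℚ) = 4 * (c : ℚ) - 1 := by
    have h : ((a : ℕ) : ℚ) + 1 = 4 * (c : ℚ) := by exact_mod_cast congrArg (Nat.cast : ℕ → ℚ) hc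
    linarith
  have E0 : e 0 = (⟨1, 0, 0, 0⟩ : ℍ[ℚ, -(a : ℚ), -(b : ℚ)]) := by
    subst hi hj hk he; ext <;> simp
  have E1 : e 1 = (⟨1/2, 1/2, 0, 0⟩ : ℍ[ℚ, -(a : ℚ), -(b : ℚ)]) := by
    subst hi hj hk he; ext <;> simp <;> norm_num
  have E2 : e 2 = (⟨0, 0, 1, 0⟩ : ℍ[ℚ, -(a : ℚ), -(b : ℚ)]) := by
    subst hi hj hk he; ext <;> simp
  have E3 : e 3 = (⟨0, 0, 1/2, 1/2⟩ : ℍ[ℚ, -(a : ℚ), -(b : ℚ)]) := by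
    subst hi hj hk he; ext <;> simp <;> norm_num
  have he0 : e 0 = 1 := by rw [E0]; rfl
  have m0 : e 0 ∈ quadSpan e := Submodule.subset_span (by simp)
  have m1 : e 1 ∈ quadSpan e := Submodule.subset_span (by simp)
  have m2 : e 2 ∈ quadSpan e := Submodule.subset_span (by simp)
  have m3 : e 3 ∈ quadSpan e := Submodule.subset_span (by simp)
  have h11 : e 1 * e 1 = (-(c : ℤ)) • e 0 + e 1 := by
    rw [E0, E1]; ext <;>
      simp [QuaternionAlgebra.re_mul, QuaternionAlgebra.imI_mul, QuaternionAlgebra.imJ_mul,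
        QuaternionAlgebra.imK_mul, zsmul_eq_mul] <;> ((try rw [hca]); push_cast; first | ring | norm_num)
  have h12 : e 1 * e 2 = e 3 := by
    rw [E1, E2, E3]; ext <;>
      simp [QuaternionAlgebra.re_mul, QuaternionAlgebra.imI_mul, QuaternionAlgebra.imJ_mul,
        QuaternionAlgebra.imK_mul] <;> ring
  have h13 : e 1 * e 3 = (-(c : ℤ)) • e 2 + e 3 := by
    rw [E1, E2, E3]; ext <;>
      simp [QuaternionAlgebra.re_mul, QuaternionAlgebra.imI_mul, QuaternionAlgebra.imJ_mul,
        QuaternionAlgebra.imK_mul, zsmul_eq_mul] <;> ((try rw [hca]); push_cast; first | ring | norm_num)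
  have h21 : e 2 * e 1 = e 2 + (-1 : ℤ) • e 3 := by
    rw [E1, E2, E3]; ext <;>
      simp [QuaternionAlgebra.re_mul, QuaternionAlgebra.imI_mul, QuaternionAlgebra.imJ_mul,
        QuaternionAlgebra.imK_mul, zsmul_eq_mul] <;> ring
  have h22 : e 2 * e 2 = (-(b : ℤ)) • e 0 := by
    rw [E0, E2]; ext <;>
      simp [QuaternionAlgebra.re_mul, QuaternionAlgebra.imI_mul, QuaternionAlgebra.imJ_mul,
        QuaternionAlgebra.imK_mul, zsmul_eq_mul] <;> push_cast <;> ring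
  have h23 : e 2 * e 3 = (-(b : ℤ)) • e 0 + (b : ℤ) • e 1 := by
    rw [E0, E1, E2, E3]; ext <;>
      simp [QuaternionAlgebra.re_mul, QuaternionAlgebra.imI_mul, QuaternionAlgebra.imJ_mul,
        QuaternionAlgebra.imK_mul, zsmul_eq_mul] <;> push_cast <;> ring
  have h31 : e 3 * e 1 = (c : ℤ) • e 2 := by
    rw [E1, E2, E3]; ext <;>
      simp [QuaternionAlgebra.re_mul, QuaternionAlgebra.imI_mul, QuaternionAlgebra.imJ_mul,
        QuaternionAlgebra.imK_mul, zsmul_eq_mul] <;> ((try rw [hca]); push_cast; first | ring | norm_num)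
  have h32 : e 3 * e 2 = (-(b : ℤ)) • e 1 := by
    rw [E1, E2, E3]; ext <;>
      simp [QuaternionAlgebra.re_mul, QuaternionAlgebra.imI_mul, QuaternionAlgebra.imJ_mul,
        QuaternionAlgebra.imK_mul, zsmul_eq_mul] <;> push_cast <;> ring
  have h33 : e 3 * e 3 = (-((b : ℤ) * (c : ℤ))) • e 0 := by
    rw [E0, E3]; ext <;>
      simp [QuaternionAlgebra.re_mul, QuaternionAlgebra.imI_mul, QuaternionAlgebra.imJ_mul,
        QuaternionAlgebra.imK_mul, zsmul_eq_mul] <;> ((try rw [hca]); push_cast; first | ring | norm_num)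
  have key : ∀ u ∈ ({e 0, e 1, e 2, e 3} : Set ℍ[ℚ, -(a : ℚ), -(b : ℚ)]),
      ∀ v ∈ ({e 0, e 1, e 2, e 3} : Set ℍ[ℚ, -(a : ℚ), -(b : ℚ)]), u * v ∈ quadSpan e := by
    intro u hu v hv
    simp only [Set.mem_insert_iff, Set.mem_singleton_iff] at hu hv
    rcases hu with rfl | rfl | rfl | rfl <;> rcases hv with rfl | rfl | rfl | rfl
    · rw [he0] at m0 ⊢; rw [one_mul]; exact m0
    · rw [he0, one_mul]; exact m1
    · rw [he0, one_mul]; exact m2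
    · rw [he0, one_mul]; exact m3
    · rw [he0, mul_one]; exact m1
    · rw [h11]; exact add_mem (Submodule.smul_mem _ _ m0) m1
    · rw [h12]; exact m3
    · rw [h13]; exact add_mem (Submodule.smul_mem _ _ m2) m3
    · rw [he0, mul_one]; exact m2
    · rw [h21]; exact add_mem m2 (Submodule.smul_mem _ _ m3)
    · rw [h22]; exact Submodule.smul_mem _ _ m0
    · rw [h23]; exact add_mem (Submodule.smul_mem _ _ m0) (Submodule.smul_mem _ _ m1)
    · rw [he0, mul_one]; exact m3
    · rw [h31]; exact Submodule.smul_mem _ _ m2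
    · rw [h32]; exact Submodule.smul_mem _ _ m1
    · rw [h33]; exact Submodule.smul_mem _ _ m0
  refine ⟨by rw [← he0]; exact m0, ?_, ?_⟩
  · intro x hx y hy
    have hx' : x ∈ Submodule.span ℤ ({e 0, e 1, e 2, e 3} : Set _) := hx
    have hy' : y ∈ Submodule.span ℤ ({e 0, e 1, e 2, e 3} : Set _) := hy
    clear hx hy
    refine Submodule.span_induction (p := fun x _ => x * y ∈ quadSpan e) ?_ ?_ ?_ ?_ hx'
    · intro u hu
      refine Submodule.span_induction (p := fun v _ => u * v ∈ quadSpan e) ?_ ?_ ?_ ?_ hy'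
      · intro v hv; exact key u hu v hv
      · show u * 0 ∈ quadSpan e; rw [mul_zero]; exact zero_mem _
      · intro v w _ _ p1 p2; show u * (v + w) ∈ quadSpan e; rw [mul_add]; exact add_mem p1 p2
      · intro n v _ p1; show u * (n • v) ∈ quadSpan e; rw [mul_smul_comm]; exact Submodule.smul_mem _ _ p1
    · show 0 * y ∈ quadSpan e; rw [zero_mul]; exact zero_mem _
    · intro u w _ _ p1 p2; show (u + w) * y ∈ quadSpan e; rw [add_mul]; exact add_mem p1 p2
    · intro n u _ p1; show (n • u) * y ∈ quadSpan e; rw [smul_mul_assoc]; exact Submodule.smul_mem _ _ p1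
  · have hG : traceGram e =
        !![2, 1, 0, 0;
           1, (1 - (a : ℚ)) / 2, 0, 0;
           0, 0, -2 * (b : ℚ), -(b : ℚ);
           0, 0, -(b : ℚ), -((b : ℚ) * (1 + (a : ℚ))) / 2] := by
      ext r s
      fin_cases r <;> fin_cases s <;>
        simp [traceGram, trd, E0, E1, E2, E3, QuaternionAlgebra.re_mul, Matrix.vecHead, Matrix.vecTail] <;> ring
    rw [hG]
    simp [Matrix.det_succ_row_zero, Fin.sum_univ_succ, Fin.succAbove]
    ring
end

section
/- Let a and b be odd positive integers. In B = ℍ[ℚ, −a, −b], set e₀ = 1, e₁ = i, e₂ = j, e₃ = (1 + i + j + k)/2. Then the ℤ-submodule of B spanned by e₀, e₁, e₂, e₃ contains 1 and is closed under multiplication (so it is a ℤ-order of B, the Hurwitz-type order), and the determinant of the trace Gram matrix of (e₀, e₁, e₂, e₃) equals −4·a²·b² (so the order has reduced discriminant 2·a·b). -/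
open Quaternion
set_option maxHeartbeats 2000000

/-- For odd positive integers `a`, `b`, in `ℍ[ℚ, −a, −b]` the Hurwitz-type lattice
spanned by `1, i, j, (1+i+j+k)/2` contains `1` and is closed under multiplication,
and its trace Gram matrix has determinant `−4·a²·b²`. -/
theorem stmt_8 (a b : ℕ) (ha : 0 < a) (hb : 0 < b) (haodd : Odd a) (hbodd : Odd b)
    (i j k : ℍ[ℚ, -(a : ℚ), -(b : ℚ)])
    (hi : i = ⟨0, 1, 0, 0⟩) (hj : j = ⟨0, 0, 1, 0⟩) (hk : k = ⟨0, 0, 0, 1⟩)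
    (e : Fin 4 → ℍ[ℚ, -(a : ℚ), -(b : ℚ)])
    (he : e = ![1, i, j, (2 : ℚ)⁻¹ • (1 + i + j + k)]) :
    (1 : ℍ[ℚ, -(a : ℚ), -(b : ℚ)]) ∈ quadSpan e ∧
    (∀ x ∈ quadSpan e, ∀ y ∈ quadSpan e, x * y ∈ quadSpan e) ∧
    (traceGram e).det = -(4 * (a : ℚ) ^ 2 * (b : ℚ) ^ 2) := by
  obtain ⟨m, hm⟩ := haodd
  obtain ⟨n, hn⟩ := hbodd
  have hma : (a : ℚ) = 2 * (m : ℚ) + 1 := by rw [hm]; push_cast; ring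
  have hnb : (b : ℚ) = 2 * (n : ℚ) + 1 := by rw [hn]; push_cast; ring
  have he0 : e 0 = (⟨1, 0, 0, 0⟩ : ℍ[ℚ, -(a : ℚ), -(b : ℚ)]) := by
    rw [he]; show (1 : ℍ[ℚ, -(a : ℚ), -(b : ℚ)]) = _; ext <;> simp
  have he1 : e 1 = (⟨0, 1, 0, 0⟩ : ℍ[ℚ, -(a : ℚ), -(b : ℚ)]) := by rw [he]; simp [hi]
  have he2 : e 2 = (⟨0, 0, 1, 0⟩ : ℍ[ℚ, -(a : ℚ), -(b : ℚ)]) := by rw [he]; simp [hj]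
  have he3 : e 3 = (⟨1/2, 1/2, 1/2, 1/2⟩ : ℍ[ℚ, -(a : ℚ), -(b : ℚ)]) := by
    rw [he, hi, hj, hk]
    show (2:ℚ)⁻¹ • _ = _
    ext <;> simp <;> norm_num
  have hmem : ∀ r : Fin 4, e r ∈ quadSpan e := fun r =>
    Submodule.subset_span (by fin_cases r <;> simp)
  have key : ∀ (c₀ c₁ c₂ c₃ : ℤ) (x : ℍ[ℚ, -(a : ℚ), -(b : ℚ)]),
      x = c₀ • e 0 + c₁ • e 1 + c₂ • e 2 + c₃ • e 3 → x ∈ quadSpan e := by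
    intro c₀ c₁ c₂ c₃ x hx
    rw [hx]
    exact add_mem (add_mem (add_mem (Submodule.smul_mem _ _ (hmem 0))
      (Submodule.smul_mem _ _ (hmem 1))) (Submodule.smul_mem _ _ (hmem 2)))
      (Submodule.smul_mem _ _ (hmem 3))
  have hgen : ∀ r s : Fin 4, e r * e s ∈ quadSpan e := by
    have tac : ∀ (c₀ c₁ c₂ c₃ : ℤ) (r s : Fin 4),
        (e r * e s = c₀ • e 0 + c₁ • e 1 + c₂ • e 2 + c₃ • e 3) →
        e r * e s ∈ quadSpan e := fun c₀ c₁ c₂ c₃ r s h => key c₀ c₁ c₂ c₃ _ h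
    intro r s
    fin_cases r <;> fin_cases s
    · exact tac 1 0 0 0 0 0 (by rw [he0, he1, he2, he3]; ext <;> simp)
    · exact tac 0 1 0 0 0 1 (by rw [he0, he1, he2, he3]; ext <;> simp)
    · exact tac 0 0 1 0 0 2 (by rw [he0, he1, he2, he3]; ext <;> simp)
    · exact tac 0 0 0 1 0 3 (by rw [he0, he1, he2, he3]; ext <;> simp)
    · exact tac 0 1 0 0 1 0 (by rw [he0, he1, he2, he3]; ext <;> simp)
    · exact tac (-(2*m+1)) 0 0 0 1 1 (by rw [he0, he1, he2, he3]; ext <;> simp [hma] <;> push_cast <;> ring)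
    · exact tac (-1) (-1) (-1) 2 1 2 (by rw [he0, he1, he2, he3]; ext <;> simp <;> norm_num)
    · exact tac (-(m+1)) 0 (-(m+1)) 1 1 3 (by rw [he0, he1, he2, he3]; ext <;> simp [hma] <;> push_cast <;> ring)
    · exact tac 0 0 1 0 2 0 (by rw [he0, he1, he2, he3]; ext <;> simp)
    · exact tac 1 1 1 (-2) 2 1 (by rw [he0, he1, he2, he3]; ext <;> simp <;> norm_num)
    · exact tac (-(2*n+1)) 0 0 0 2 2 (by rw [he0, he1, he2, he3]; ext <;> simp [hnb] <;> push_cast <;> ring)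
    · exact tac (-n) (n+1) 1 (-1) 2 3 (by rw [he0, he1, he2, he3]; ext <;> simp [hnb] <;> push_cast <;> ring)
    · exact tac 0 0 0 1 3 0 (by rw [he0, he1, he2, he3]; ext <;> simp)
    · exact tac (-m) 1 (m+1) (-1) 3 1 (by rw [he0, he1, he2, he3]; ext <;> simp [hma] <;> push_cast <;> ring)
    · exact tac (-(n+1)) (-(n+1)) 0 1 3 2 (by rw [he0, he1, he2, he3]; ext <;> simp [hnb] <;> push_cast <;> ring)
    · exact tac (-((m+1)*(n+1))) 0 0 1 3 3 (by rw [he0, he1, he2, he3]; ext <;> simp [hma, hnb] <;> push_cast <;> ring)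
  refine ⟨?_, ?_, ?_⟩
  · have := hmem 0
    rwa [he0, show (⟨1, 0, 0, 0⟩ : ℍ[ℚ, -(a : ℚ), -(b : ℚ)]) = 1 from by ext <;> simp] at this
  · have hmul : quadSpan e * quadSpan e ≤ quadSpan e := by
      rw [quadSpan, Submodule.span_mul_span]
      apply Submodule.span_le.2
      rintro x hx
      rw [Set.mem_mul] at hx
      obtain ⟨y, hy, z, hz, rfl⟩ := hx
      simp only [Set.mem_insert_iff, Set.mem_singleton_iff] at hy hz
      rcases hy with rfl | rfl | rfl | rfl <;> rcases hz with rfl | rfl | rfl | rfl <;>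
        first
        | exact hgen 0 0 | exact hgen 0 1 | exact hgen 0 2 | exact hgen 0 3
        | exact hgen 1 0 | exact hgen 1 1 | exact hgen 1 2 | exact hgen 1 3
        | exact hgen 2 0 | exact hgen 2 1 | exact hgen 2 2 | exact hgen 2 3
        | exact hgen 3 0 | exact hgen 3 1 | exact hgen 3 2 | exact hgen 3 3
    exact fun x hx y hy => hmul (Submodule.mul_mem_mul hx hy)
  · simp only [traceGram, Matrix.of_apply, trd]
    rw [show (Matrix.of fun r s => 2 * (e r * e s).re) =
      Matrix.of ![![2 * (e 0 * e 0).re, 2 * (e 0 * e 1).re, 2 * (e 0 * e 2).re, 2 * (e 0 * e 3).re],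
        ![2 * (e 1 * e 0).re, 2 * (e 1 * e 1).re, 2 * (e 1 * e 2).re, 2 * (e 1 * e 3).re],
        ![2 * (e 2 * e 0).re, 2 * (e 2 * e 1).re, 2 * (e 2 * e 2).re, 2 * (e 2 * e 3).re],
        ![2 * (e 3 * e 0).re, 2 * (e 3 * e 1).re, 2 * (e 3 * e 2).re, 2 * (e 3 * e 3).re]] from by
        ext r s; fin_cases r <;> fin_cases s <;> rfl]
    rw [he0, he1, he2, he3]
    simp [Matrix.det_succ_row_zero, Fin.sum_univ_succ, QuaternionAlgebra.re_mul,
      show (Fin.castSucc 2 : Fin 4) = 2 from rfl, show (Fin.castSucc 1 : Fin 4) = 1 from rfl,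
      show (Fin.castSucc 0 : Fin 4) = 0 from rfl, show (Fin.succAbove (3 : Fin 4) (2 : Fin 3)) = 2 from rfl]
    ring
end

section
/- Let p and n be positive integers with p ≡ 1 (mod 4) and n ≡ 2 (mod 4). In B = ℍ[ℚ, −p, −n], set e₀ = 1, e₁ = i, e₂ = (1 + i + j)/2, e₃ = (−1 − i + k)/2. Then the ℤ-submodule of B spanned by e₀, e₁, e₂, e₃ contains 1, contains j, and is closed under multiplication (so it is a ℤ-order of B), and the determinant of the trace Gram matrix of (e₀, e₁, e₂, e₃) equals −n²·p² (so the order has reduced discriminant n·p). -/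
open Quaternion

set_option maxHeartbeats 1600000 in
/-- For positive integers `p ≡ 1 (mod 4)` and `n ≡ 2 (mod 4)`, in `ℍ[ℚ, −p, −n]` the
lattice spanned by `1, i, (1+i+j)/2, (−1−i+k)/2` contains `1` and `j`, is closed under
multiplication, and its trace Gram matrix has determinant `−n²·p²`. -/
theorem stmt_9 (p n : ℕ) (hp : 0 < p) (hn : 0 < n) (hp4 : p % 4 = 1) (hn4 : n % 4 = 2)
    (i j k : ℍ[ℚ, -(p : ℚ), -(n : ℚ)])
    (hi : i = ⟨0, 1, 0, 0⟩) (hj : j = ⟨0, 0, 1, 0⟩) (hk : k = ⟨0, 0, 0, 1⟩)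
    (e : Fin 4 → ℍ[ℚ, -(p : ℚ), -(n : ℚ)])
    (he : e = ![1, i, (2 : ℚ)⁻¹ • (1 + i + j), (2 : ℚ)⁻¹ • (-1 - i + k)]) :
    (1 : ℍ[ℚ, -(p : ℚ), -(n : ℚ)]) ∈ quadSpan e ∧
    j ∈ quadSpan e ∧
    (∀ x ∈ quadSpan e, ∀ y ∈ quadSpan e, x * y ∈ quadSpan e) ∧
    (traceGram e).det = -((n : ℚ) ^ 2 * (p : ℚ) ^ 2) := by
  obtain ⟨m, hm⟩ : ∃ m : ℕ, p = 4 * m + 1 := ⟨p / 4, by omega⟩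
  obtain ⟨l, hl⟩ : ∃ l : ℕ, n = 4 * l + 2 := ⟨n / 4, by omega⟩
  have hmQ : (p : ℚ) = 4 * (m : ℚ) + 1 := by rw [hm]; push_cast; ring
  have hlQ : (n : ℚ) = 4 * (l : ℚ) + 2 := by rw [hl]; push_cast; ring
  have he0 : e 0 = (⟨1, 0, 0, 0⟩ : ℍ[ℚ, -(p : ℚ), -(n : ℚ)]) := by rw [he]; rfl
  have he0' : e 0 = (1 : ℍ[ℚ, -(p : ℚ), -(n : ℚ)]) := by rw [he]; rfl
  have he1 : e 1 = (⟨0, 1, 0, 0⟩ : ℍ[ℚ, -(p : ℚ), -(n : ℚ)]) := by rw [he]; simp [hi]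
  have he2 : e 2 = (⟨1/2, 1/2, 1/2, 0⟩ : ℍ[ℚ, -(p : ℚ), -(n : ℚ)]) := by
    rw [he]; simp [hi, hj]; ext <;> simp
  have he3 : e 3 = (⟨-(1/2), -(1/2), 0, 1/2⟩ : ℍ[ℚ, -(p : ℚ), -(n : ℚ)]) := by
    rw [he]; simp [hi, hk]; ext <;> simp
  have hgen : ∀ s : Fin 4, e s ∈ quadSpan e := by
    intro s
    apply Submodule.subset_span
    fin_cases s <;> simp
  have hcomb : ∀ (z0 z1 z2 z3 : ℤ) (x : ℍ[ℚ, -(p : ℚ), -(n : ℚ)]),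
      x = z0 • e 0 + z1 • e 1 + z2 • e 2 + z3 • e 3 → x ∈ quadSpan e := by
    intro z0 z1 z2 z3 x hx
    rw [hx]
    exact Submodule.add_mem _ (Submodule.add_mem _ (Submodule.add_mem _
      (Submodule.smul_mem _ _ (hgen 0)) (Submodule.smul_mem _ _ (hgen 1)))
      (Submodule.smul_mem _ _ (hgen 2))) (Submodule.smul_mem _ _ (hgen 3))
  -- the nine nontrivial generator products
  have h11 : e 1 * e 1 ∈ quadSpan e :=
    hcomb (-(4 * (m : ℤ) + 1)) 0 0 0 _ (by
      rw [he0, he1, he2, he3]; ext <;> simp [hmQ] <;> push_cast <;> ring)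
  have h12 : e 1 * e 2 ∈ quadSpan e :=
    hcomb (-2 * (m : ℤ)) 1 0 1 _ (by
      rw [he0, he1, he2, he3]; ext <;> simp [hmQ] <;> push_cast <;> ring)
  have h21 : e 2 * e 1 ∈ quadSpan e :=
    hcomb (-(2 * (m : ℤ) + 1)) 0 0 (-1) _ (by
      rw [he0, he1, he2, he3]; ext <;> simp [hmQ] <;> push_cast <;> ring)
  have h13 : e 1 * e 3 ∈ quadSpan e :=
    hcomb (4 * (m : ℤ) + 1) (2 * (m : ℤ)) (-(4 * (m : ℤ) + 1)) 0 _ (by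
      rw [he0, he1, he2, he3]; ext <;> simp [hmQ] <;> push_cast <;> ring)
  have h31 : e 3 * e 1 ∈ quadSpan e :=
    hcomb 0 (-(2 * (m : ℤ) + 1)) (4 * (m : ℤ) + 1) 0 _ (by
      rw [he0, he1, he2, he3]; ext <;> simp [hmQ] <;> push_cast <;> ring)
  have h22 : e 2 * e 2 ∈ quadSpan e :=
    hcomb (-((m : ℤ) + (l : ℤ) + 1)) 0 1 0 _ (by
      rw [he0, he1, he2, he3]; ext <;> simp [hmQ, hlQ] <;> push_cast <;> ring)
  have h23 : e 2 * e 3 ∈ quadSpan e :=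
    hcomb (2 * (m : ℤ) + 1) ((m : ℤ) + (l : ℤ) + 1) (-(2 * (m : ℤ) + 1)) 1 _ (by
      rw [he0, he1, he2, he3]; ext <;> simp [hmQ, hlQ] <;> push_cast <;> ring)
  have h32 : e 3 * e 2 ∈ quadSpan e :=
    hcomb 0 (-((m : ℤ) + (l : ℤ) + 1)) (2 * (m : ℤ)) 0 _ (by
      rw [he0, he1, he2, he3]; ext <;> simp [hmQ, hlQ] <;> push_cast <;> ring)
  have h33 : e 3 * e 3 ∈ quadSpan e :=
    hcomb (-(4 * (m : ℤ) * (l : ℤ) + 3 * (m : ℤ) + (l : ℤ) + 1)) 0 0 (-1) _ (by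
      rw [he0, he1, he2, he3]; ext <;> simp [hmQ, hlQ] <;> push_cast <;> ring)
  have h0L : ∀ s : Fin 4, e 0 * e s ∈ quadSpan e := by
    intro s; rw [he0', one_mul]; exact hgen s
  have h0R : ∀ r : Fin 4, e r * e 0 ∈ quadSpan e := by
    intro r; rw [he0', mul_one]; exact hgen r
  have hmulgen : ∀ r s : Fin 4, e r * e s ∈ quadSpan e := by
    intro r s
    fin_cases r <;> fin_cases s
    exacts [h0L 0, h0L 1, h0L 2, h0L 3,
      h0R 1, h11, h12, h13,
      h0R 2, h21, h22, h23,
      h0R 3, h31, h32, h33]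
  have hclose : ∀ x ∈ quadSpan e, ∀ y ∈ quadSpan e, x * y ∈ quadSpan e := by
    have step1 : ∀ r : Fin 4, ∀ y ∈ quadSpan e, e r * y ∈ quadSpan e := by
      intro r y hy
      have hle : quadSpan e ≤ (quadSpan e).comap (LinearMap.mulLeft ℤ (e r)) := by
        refine Submodule.span_le.mpr ?_
        intro w hw
        simp only [Set.mem_insert_iff, Set.mem_singleton_iff] at hw
        simp only [SetLike.mem_coe, Submodule.mem_comap, LinearMap.mulLeft_apply]
        rcases hw with rfl | rfl | rfl | rfl
        · exact hmulgen r 0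
        · exact hmulgen r 1
        · exact hmulgen r 2
        · exact hmulgen r 3
      exact hle hy
    intro x hx y hy
    have hle : quadSpan e ≤ (quadSpan e).comap (LinearMap.mulRight ℤ y) := by
      refine Submodule.span_le.mpr ?_
      intro w hw
      simp only [Set.mem_insert_iff, Set.mem_singleton_iff] at hw
      simp only [SetLike.mem_coe, Submodule.mem_comap, LinearMap.mulRight_apply]
      rcases hw with rfl | rfl | rfl | rfl
      · exact step1 0 y hy
      · exact step1 1 y hy
      · exact step1 2 y hy
      · exact step1 3 y hy
    exact hle hx
  refine ⟨?_, ?_, hclose, ?_⟩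
  · rw [← he0']; exact hgen 0
  · exact hcomb (-1) (-1) 2 0 j (by
      rw [he0, he1, he2, he3, hj]; ext <;> simp <;> push_cast <;> ring)
  · have hG : traceGram e = Matrix.of
        ![![2, 0, 1, -1],
          ![0, -2*(p:ℚ), -(p:ℚ), (p:ℚ)],
          ![1, -(p:ℚ), (1-(p:ℚ)-(n:ℚ))/2, ((p:ℚ)-1)/2],
          ![-1, (p:ℚ), ((p:ℚ)-1)/2, (1-(p:ℚ)-(p:ℚ)*(n:ℚ))/2]] := by
      ext r s
      fin_cases r <;> fin_cases s <;>
        simp [traceGram, trd, he0, he1, he2, he3] <;> ring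
    rw [hG]
    simp [Matrix.det_succ_row_zero, Fin.sum_univ_succ, Fin.succAbove,
      show Fin.castSucc (2:Fin 3) = (2:Fin 4) from rfl]
    ring
end

section
/- Let a and b be rational numbers, let q and d be positive rational numbers, and let ω₁, ω₂ ∈ B = ℍ[ℚ, a, b] satisfy ω₁² = −q·1 and ω₂² = −d·1. Put s := trd(ω₁·ω₂) = 2·(ω₁·ω₂).re. Then the determinant of the trace Gram matrix of the quadruple (1, ω₁, ω₂, ω₁·ω₂) equals −(4·q·d − s²)². -/
open Quaternion

/-- A quaternion whose square is a negative scalar has zero real part. -/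
lemma re_eq_zero_of_sq {a b q : ℚ} (hq : 0 < q) (ω : ℍ[ℚ, a, b])
    (hω : ω ^ 2 = algebraMap ℚ ℍ[ℚ, a, b] (-q)) :
    ω.re = 0 ∧ a * ω.imI * ω.imI + b * ω.imJ * ω.imJ - a * b * ω.imK * ω.imK = -q := by
  rw [sq] at hω
  have hre := congrArg QuaternionAlgebra.re hω
  have hi := congrArg QuaternionAlgebra.imI hω
  have hj := congrArg QuaternionAlgebra.imJ hω
  have hk := congrArg QuaternionAlgebra.imK hω
  simp only [QuaternionAlgebra.re_mul, QuaternionAlgebra.imI_mul,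
    QuaternionAlgebra.imJ_mul, QuaternionAlgebra.imK_mul, zero_mul, add_zero] at hre hi hj hk
  have hre' : ω.re * ω.re + a * ω.imI * ω.imI + b * ω.imJ * ω.imJ
      - a * b * ω.imK * ω.imK = -q := by
    rw [hre]; simp
  have hw : ω.re = 0 := by
    by_contra hw
    have hx : ω.imI = 0 := by
      have h2 : ω.re * ω.imI = 0 := by
        have := hi; simp at this; linear_combination this / 2
      rcases mul_eq_zero.mp h2 with h | h
      · exact absurd h hw
      · exact h
    have hy : ω.imJ = 0 := by
      have h2 : ω.re * ω.imJ = 0 := by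
        have := hj; simp at this; linear_combination this / 2
      rcases mul_eq_zero.mp h2 with h | h
      · exact absurd h hw
      · exact h
    have hz : ω.imK = 0 := by
      have h2 : ω.re * ω.imK = 0 := by
        have := hk; simp at this; linear_combination this / 2
      rcases mul_eq_zero.mp h2 with h | h
      · exact absurd h hw
      · exact h
    rw [hx, hy, hz] at hre'
    nlinarith [hre', sq_nonneg ω.re]
  refine ⟨hw, ?_⟩
  rw [hw] at hre'
  linarith [hre']

/-- If `ω₁² = −q` and `ω₂² = −d` in `ℍ[ℚ, a, b]` with `q, d > 0`, and
`s = trd(ω₁·ω₂)`, then the trace Gram matrix of `(1, ω₁, ω₂, ω₁·ω₂)` has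
determinant `−(4·q·d − s²)²`. -/
theorem stmt_10 (a b q d : ℚ) (hq : 0 < q) (hd : 0 < d)
    (ω₁ ω₂ : ℍ[ℚ, a, b])
    (hω₁ : ω₁ ^ 2 = algebraMap ℚ ℍ[ℚ, a, b] (-q))
    (hω₂ : ω₂ ^ 2 = algebraMap ℚ ℍ[ℚ, a, b] (-d))
    (s : ℚ) (hs : s = trd (ω₁ * ω₂)) :
    (traceGram ![1, ω₁, ω₂, ω₁ * ω₂]).det = -(4 * q * d - s ^ 2) ^ 2 := by
  obtain ⟨hw1, hq1⟩ := re_eq_zero_of_sq hq ω₁ hω₁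
  obtain ⟨hw2, hq2⟩ := re_eq_zero_of_sq hd ω₂ hω₂
  have hs' : s = 2 * (a * ω₁.imI * ω₂.imI + b * ω₁.imJ * ω₂.imJ - a * b * ω₁.imK * ω₂.imK) := by
    rw [hs]
    simp [trd, QuaternionAlgebra.re_mul, hw1, hw2]
  have hM : traceGram ![1, ω₁, ω₂, ω₁ * ω₂] =
      !![2, 0, 0, s; 0, -(2*q), s, 0; 0, s, -(2*d), 0; s, 0, 0, s^2 - 2*q*d] := by
    ext i j
    fin_cases i <;> fin_cases j <;>
      simp [traceGram, trd, Matrix.of_apply,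
        QuaternionAlgebra.re_mul, QuaternionAlgebra.imI_mul, QuaternionAlgebra.imJ_mul,
        QuaternionAlgebra.imK_mul, hw1, hw2] <;>
      first
      | ring1
      | linear_combination 2 * hq1
      | linear_combination 2 * hq2
      | linear_combination hs'
      | linear_combination -hs'
      | linear_combination
          (-(s + 2 * (a * ω₁.imI * ω₂.imI + b * ω₁.imJ * ω₂.imJ - a * b * ω₁.imK * ω₂.imK))) * hs'
          - 2 * (a * ω₂.imI * ω₂.imI + b * ω₂.imJ * ω₂.imJ - a * b * ω₂.imK * ω₂.imK) * hq1
          + 2 * q * hq2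
  rw [hM]
  simp [Matrix.det_succ_row_zero, Fin.sum_univ_succ, Fin.succAbove]
  ring
end
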